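/- Let X ∈ Mat_n(ℂ) and let j : ℂⁿ → ℂ[x] be a ℂ-linear map. Then there exists a unique ℂ-linear map h : ℂⁿ → ℂ[x] such that for every v ∈ ℂⁿ the polynomial j(v) + x·h(v) − h(X·v) is constant (has degree ≤ 0). -/
import Mathlib

open Polynomial

private lemma deg_bound {n : ℕ} (f : (Fin n → ℂ) →ₗ[ℂ] Polynomial ℂ) :
    ∃ D : ℕ, ∀ v, (f v).degree ≤ (D : WithBot ℕ) := by
  refine ⟨Finset.univ.sup (fun i => (f ((Pi.single i 1 : Fin n → ℂ))).natDegree), fun v => ?_⟩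
  have hv : v = ∑ i, v i • (Pi.single i 1 : Fin n → ℂ) := by
    ext jj
    simp [Pi.single_apply]
  rw [hv, map_sum]
  refine (Polynomial.degree_sum_le _ _).trans ?_
  refine Finset.sup_le fun i _ => ?_
  rw [map_smul]
  refine (Polynomial.degree_smul_le _ _).trans ?_
  refine (Polynomial.degree_le_natDegree).trans ?_
  have := Finset.le_sup (f := fun i => (f ((Pi.single i 1 : Fin n → ℂ))).natDegree) (Finset.mem_univ i)
  exact_mod_cast this

private lemma exists_aux {n : ℕ} (X : Matrix (Fin n) (Fin n) ℂ) :
    ∀ D : ℕ, ∀ j : (Fin n → ℂ) →ₗ[ℂ] Polynomial ℂ,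
      (∀ v, (j v).degree ≤ (D : WithBot ℕ)) →
      ∃ h : (Fin n → ℂ) →ₗ[ℂ] Polynomial ℂ,
        ∀ v, (j v + Polynomial.X * h v - h (X.mulVec v)).degree ≤ 0 := by
  intro D
  induction D with
  | zero =>
    intro j hj
    refine ⟨0, fun v => ?_⟩
    simpa using hj v
  | succ D ih =>
    intro j hj
    set g : (Fin n → ℂ) →ₗ[ℂ] Polynomial ℂ :=
      -((Polynomial.monomial D).comp ((Polynomial.lcoeff ℂ (D+1)).comp j)) with hg
    set j₁ : (Fin n → ℂ) →ₗ[ℂ] Polynomial ℂ :=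
      j + (LinearMap.mulLeft ℂ Polynomial.X).comp g - g.comp X.mulVecLin with hj₁def
    have hdeg : ∀ v, (j₁ v).degree ≤ (D : WithBot ℕ) := by
      intro v
      rw [Polynomial.degree_le_iff_coeff_zero]
      intro m hm
      have hm' : D < m := by exact_mod_cast hm
      obtain ⟨M, rfl⟩ : ∃ M, m = M + 1 := ⟨m - 1, by omega⟩
      simp only [hj₁def, hg, LinearMap.sub_apply, LinearMap.add_apply, LinearMap.comp_apply,
        LinearMap.neg_apply, LinearMap.mulLeft_apply, Matrix.mulVecLin_apply,
        Polynomial.coeff_sub, Polynomial.coeff_add, Polynomial.lcoeff_apply,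
        Polynomial.coeff_neg, Polynomial.coeff_X_mul, Polynomial.coeff_monomial]
      by_cases hDM : D = M
      · subst hDM
        have h2 : (j (X.mulVec v)).coeff (D+1) = 0 ∨ True := Or.inr trivial
        simp
      · have h1 : (j v).coeff (M+1) = 0 := by
          apply Polynomial.coeff_eq_zero_of_degree_lt
          refine lt_of_le_of_lt (hj v) ?_
          exact_mod_cast (by omega : D + 1 < M + 1)
        have hDM1 : D ≠ M + 1 := by omega
        simp [h1, hDM, hDM1]
    obtain ⟨h₁, hh₁⟩ := ih j₁ hdeg
    refine ⟨g + h₁, fun v => ?_⟩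
    have e : j v + Polynomial.X * ((g + h₁) v) - (g + h₁) (X.mulVec v)
        = j₁ v + Polynomial.X * h₁ v - h₁ (X.mulVec v) := by
      simp only [hj₁def, LinearMap.add_apply, LinearMap.sub_apply, LinearMap.comp_apply,
        LinearMap.mulLeft_apply, Matrix.mulVecLin_apply]
      ring
    rw [e]
    exact hh₁ v

/-- For any `X ∈ Mat_n(ℂ)` and `ℂ`-linear `j : ℂⁿ → ℂ[x]` there is a unique `ℂ`-linear
`h : ℂⁿ → ℂ[x]` such that `j(v) + x·h(v) − h(X·v)` is constant (degree `≤ 0`) for all `v`. -/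
theorem existsUnique_homotopy_to_constant_j (n : ℕ)
    (X : Matrix (Fin n) (Fin n) ℂ)
    (j : (Fin n → ℂ) →ₗ[ℂ] Polynomial ℂ) :
    ∃! h : (Fin n → ℂ) →ₗ[ℂ] Polynomial ℂ,
      ∀ v : Fin n → ℂ, (j v + Polynomial.X * h v - h (X.mulVec v)).degree ≤ 0 := by
  obtain ⟨D, hD⟩ := deg_bound j
  obtain ⟨h, hh⟩ := exists_aux X D j hD
  refine ⟨h, hh, ?_⟩
  intro h' hh'
  set d : (Fin n → ℂ) →ₗ[ℂ] Polynomial ℂ := h' - h with hd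
  have key : ∀ v, (Polynomial.X * d v - d (X.mulVec v)).degree ≤ 0 := by
    intro v
    have e : Polynomial.X * d v - d (X.mulVec v)
        = (j v + Polynomial.X * h' v - h' (X.mulVec v))
          - (j v + Polynomial.X * h v - h (X.mulVec v)) := by
      simp only [hd, LinearMap.sub_apply]
      ring
    rw [e]
    exact (Polynomial.degree_sub_le _ _).trans (max_le (hh' v) (hh v))
  obtain ⟨E, hE⟩ := deg_bound d
  have step : ∀ (k : ℕ) (v : Fin n → ℂ), (d v).coeff k = (d (X.mulVec v)).coeff (k+1) := by
    intro k v
    have h0 : (Polynomial.X * d v - d (X.mulVec v)).coeff (k+1) = 0 := by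
      apply Polynomial.coeff_eq_zero_of_degree_lt
      refine lt_of_le_of_lt (key v) ?_
      exact_mod_cast (by omega : 0 < k + 1)
    rw [Polynomial.coeff_sub, Polynomial.coeff_X_mul] at h0
    exact sub_eq_zero.mp h0
  have iter : ∀ (m k : ℕ) (v : Fin n → ℂ),
      (d v).coeff k = (d ((X^m).mulVec v)).coeff (k + m) := by
    intro m
    induction m with
    | zero => intro k v; simp [Matrix.one_mulVec]
    | succ m ihm =>
      intro k v
      rw [step k v, ihm (k+1) (X.mulVec v), Matrix.mulVec_mulVec, ← pow_succ]
      ring_nf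
  have hd0 : d = 0 := by
    apply LinearMap.ext; intro v
    apply Polynomial.ext; intro k
    simp only [LinearMap.zero_apply, Polynomial.coeff_zero]
    rw [iter (E+1) k v]
    apply Polynomial.coeff_eq_zero_of_degree_lt
    refine lt_of_le_of_lt (hE _) ?_
    exact_mod_cast (by omega : E < k + (E + 1))
  exact sub_eq_zero.mp hd0
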